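/- Let p be a prime with p > 7·L² for some positive real L, and let ω ∈ F_p with ω² + ω + 1 = 0 (assuming p ≡ 1 mod 3). If c₃, c₄ are integers with |c₃|, |c₄| ≤ L and c₄ ≡ −c₃ω² (mod p), then c₃ = c₄ = 0. -/
import Mathlib


theorem stmt_12 (p : ℕ) [Fact p.Prime] (hp3 : p % 3 = 1) (L : ℝ) (hL : 0 < L)
    (hpL : 7 * L ^ 2 < (p : ℝ)) (ω : ZMod p) (hω : ω ^ 2 + ω + 1 = 0)
    (c₃ c₄ : ℤ) (hc₃ : |(c₃ : ℝ)| ≤ L) (hc₄ : |(c₄ : ℝ)| ≤ L)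
    (hcong : (c₄ : ZMod p) = -(c₃ : ZMod p) * ω ^ 2) :
    c₃ = 0 ∧ c₄ = 0 := by
  set N : ℤ := c₃ ^ 2 - c₃ * c₄ + c₄ ^ 2 with hN
  have hω3 : ω ^ 3 = 1 := by linear_combination (ω - 1) * hω
  have hcast : ((N : ℤ) : ZMod p) = 0 := by
    push_cast [hN]
    rw [hcong]
    linear_combination ((c₃ : ZMod p) ^ 2) * hω + ((c₃ : ZMod p) ^ 2) * ω * hω3
  have hdvd : (p : ℤ) ∣ N := (ZMod.intCast_zmod_eq_zero_iff_dvd N p).mp hcast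
  have hNR : (N : ℝ) ≤ 3 * L ^ 2 := by
    have h3 : (c₃ : ℝ) ^ 2 ≤ L ^ 2 := by
      have := sq_abs (c₃ : ℝ); nlinarith [abs_nonneg (c₃ : ℝ)]
    have h4 : (c₄ : ℝ) ^ 2 ≤ L ^ 2 := by
      have := sq_abs (c₄ : ℝ); nlinarith [abs_nonneg (c₄ : ℝ)]
    have h34 : (c₃ : ℝ) * c₄ ≥ -(L ^ 2) := by
      have := abs_mul (c₃ : ℝ) (c₄ : ℝ)
      nlinarith [neg_abs_le ((c₃ : ℝ) * c₄), abs_nonneg (c₃ : ℝ), abs_nonneg (c₄ : ℝ)]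
    push_cast [hN]
    nlinarith
  have hN0 : 0 ≤ N := by nlinarith [sq_nonneg (c₃ - c₄), sq_nonneg c₃, sq_nonneg c₄]
  have hNlt : N < (p : ℤ) := by
    have : (N : ℝ) < (p : ℝ) := by nlinarith
    exact_mod_cast this
  have hNz : N = 0 := Int.eq_zero_of_abs_lt_dvd hdvd (by rwa [abs_of_nonneg hN0])
  constructor <;> nlinarith [sq_nonneg (c₃ - c₄), sq_nonneg c₃, sq_nonneg c₄, sq_nonneg (c₃ + c₄)]
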